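/- Let v_1, …, v_m ∈ ℝ^d be vectors, not all zero, let s ∈ ℕ with s ≥ 1, and let λ > 0. Define the probability distribution p on [m] × [d] by p(i,j) = |(v_i)_j| / ∑_{k=1}^m ‖v_k‖₁, let (I_1, J_1), …, (I_s, J_s) be i.i.d. samples from p, set Γ = λ ∑_{k=1}^m ‖v_k‖₁, and define random vectors g_1, …, g_m ∈ ℝ^d by (g_i)_j = (|{ℓ ∈ [s] : (I_ℓ, J_ℓ) = (i,j)}| / s) · sign((v_i)_j) · Γ. Then for every i ∈ [m], E[‖g_i‖₂²] = λ² [ (1 − 1/s) ‖v_i‖₂² + (1/s) ‖v_i‖₁ ∑_{k=1}^m ‖v_k‖₁ ]. In particular, if ‖v_i‖₂ ≤ G₂, ‖v_i‖₁ ≤ G_∞, ∑_{k=1}^m ‖v_k‖₁ ≤ G₁, and G₁ G_∞ ≥ G₂², then E[‖g_i‖₂²] ≤ λ² ( G₂² + (G₁ G_∞ − G₂²)/s ). -/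

import Mathlib

open MeasureTheory ProbabilityTheory

lemma aux_count {s : ℕ} {α : Type*} [MeasurableSpace α] [MeasurableSingletonClass α] [Countable α] [DecidableEq α]
    {Ω : Type*} [MeasurableSpace Ω] (μ : Measure Ω) [IsProbabilityMeasure μ]
    (S : Fin s → Ω → α) (hmeas : ∀ ℓ, Measurable (S ℓ))
    (hiid : iIndepFun S μ)
    (a : α) (p : ℝ) (hp : 0 ≤ p)
    (hdist : ∀ ℓ, μ (S ℓ ⁻¹' {a}) = ENNReal.ofReal p) :
    Integrable (fun ω => (((Finset.univ.filter fun ℓ => S ℓ ω = a).card : ℝ)) ^ 2) μ ∧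
    ∫ ω, (((Finset.univ.filter fun ℓ => S ℓ ω = a).card : ℝ)) ^ 2 ∂μ
      = s * p + s * ((s : ℝ) - 1) * p ^ 2 := by
  classical
  set X : Fin s → Ω → ℝ := fun ℓ ω => if S ℓ ω = a then 1 else 0 with hX
  have hset : ∀ ℓ, MeasurableSet (S ℓ ⁻¹' {a}) := fun ℓ => hmeas ℓ (measurableSet_singleton a)
  have hXind : ∀ ℓ, X ℓ = (S ℓ ⁻¹' {a}).indicator (fun _ => (1:ℝ)) := by
    intro ℓ; funext ω; simp [hX, Set.indicator_apply]
  have hprod_eq : ∀ ℓ ℓ' : Fin s, (fun ω => X ℓ ω * X ℓ' ω)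
      = ((S ℓ ⁻¹' {a}) ∩ (S ℓ' ⁻¹' {a})).indicator (fun _ => (1:ℝ)) := by
    intro ℓ ℓ'; funext ω
    simp only [hX, Set.indicator_apply, Set.mem_inter_iff, Set.mem_preimage,
      Set.mem_singleton_iff]
    split_ifs <;> simp_all
  have hprod_int : ∀ ℓ ℓ' : Fin s, Integrable (fun ω => X ℓ ω * X ℓ' ω) μ := by
    intro ℓ ℓ'; rw [hprod_eq]
    exact (integrable_const (1:ℝ)).indicator ((hset ℓ).inter (hset ℓ'))
  have hXint : ∀ ℓ, Integrable (X ℓ) μ := by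
    intro ℓ; rw [hXind ℓ]; exact (integrable_const (1:ℝ)).indicator (hset ℓ)
  have hXval : ∀ ℓ, ∫ ω, X ℓ ω ∂μ = p := by
    intro ℓ
    rw [hXind ℓ, MeasureTheory.integral_indicator_const (1:ℝ) (hset ℓ), measureReal_def, hdist ℓ,
      ENNReal.toReal_ofReal hp, smul_eq_mul, mul_one]
  have hNsq : ∀ ω, ((Finset.univ.filter fun ℓ => S ℓ ω = a).card : ℝ) ^ 2
      = ∑ ℓ, ∑ ℓ', X ℓ ω * X ℓ' ω := by
    intro ω
    have hN : ((Finset.univ.filter fun ℓ => S ℓ ω = a).card : ℝ) = ∑ ℓ, X ℓ ω := by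
      rw [Finset.card_filter]
      push_cast
      simp [hX]
    rw [hN, sq, Finset.sum_mul_sum]
  have hterm : ∀ ℓ ℓ' : Fin s, ∫ ω, X ℓ ω * X ℓ' ω ∂μ = if ℓ = ℓ' then p else p ^ 2 := by
    intro ℓ ℓ'
    by_cases h : ℓ = ℓ'
    · subst h
      rw [if_pos rfl,
        show (fun ω => X ℓ ω * X ℓ ω) = X ℓ from funext fun ω => by
          simp only [hX]; split_ifs <;> ring,
        hXval]
    · rw [if_neg h]
      have hf : Measurable (fun b : α => if b = a then (1:ℝ) else 0) := measurable_of_countable _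
      have hind : IndepFun (X ℓ) (X ℓ') μ := (hiid.indepFun h).comp hf hf
      have := hind.integral_mul_eq_mul_integral (hXint ℓ).aestronglyMeasurable (hXint ℓ').aestronglyMeasurable
      simp only [Pi.mul_apply] at this
      rw [show (fun ω => X ℓ ω * X ℓ' ω) = X ℓ * X ℓ' from rfl]
      exact this.trans (by rw [hXval, hXval, sq])
  have hint2 : Integrable (fun ω => ∑ ℓ, ∑ ℓ', X ℓ ω * X ℓ' ω) μ :=
    integrable_finset_sum _ fun ℓ _ => integrable_finset_sum _ fun ℓ' _ => hprod_int ℓ ℓ'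
  constructor
  · rw [show (fun ω => ((Finset.univ.filter fun ℓ => S ℓ ω = a).card : ℝ) ^ 2)
        = fun ω => ∑ ℓ, ∑ ℓ', X ℓ ω * X ℓ' ω from funext hNsq]
    exact hint2
  · calc ∫ ω, ((Finset.univ.filter fun ℓ => S ℓ ω = a).card : ℝ) ^ 2 ∂μ
        = ∫ ω, ∑ ℓ, ∑ ℓ', X ℓ ω * X ℓ' ω ∂μ := by simp only [hNsq]
      _ = ∑ ℓ, ∑ ℓ', ∫ ω, X ℓ ω * X ℓ' ω ∂μ := by
          rw [integral_finset_sum _ fun ℓ _ =>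
            integrable_finset_sum _ fun ℓ' _ => hprod_int ℓ ℓ']
          exact Finset.sum_congr rfl fun ℓ _ =>
            integral_finset_sum _ fun ℓ' _ => hprod_int ℓ ℓ'
      _ = ∑ _ℓ : Fin s, (p + ((s:ℝ) - 1) * p ^ 2) := by
          refine Finset.sum_congr rfl fun ℓ _ => ?_
          simp only [hterm]
          calc ∑ ℓ', (if ℓ = ℓ' then p else p ^ 2)
              = ∑ ℓ', (p ^ 2 + if ℓ = ℓ' then p - p ^ 2 else 0) :=
                Finset.sum_congr rfl fun ℓ' _ => by split_ifs <;> ring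
            _ = p + ((s:ℝ) - 1) * p ^ 2 := by
                rw [Finset.sum_add_distrib, Finset.sum_const, Finset.sum_ite_eq]
                simp [Finset.card_univ]
                ring
      _ = s * p + s * ((s:ℝ) - 1) * p ^ 2 := by
          rw [Finset.sum_const]
          simp [Finset.card_univ]
          ring

theorem stmt6 {m d s : ℕ} (hm : 0 < m) (hd : 0 < d) (hs : 1 ≤ s)
    {Ω : Type*} [MeasurableSpace Ω] (μ : Measure Ω) [IsProbabilityMeasure μ]
    (v : Fin m → Fin d → ℝ) (hv : ∃ i j, v i j ≠ 0)
    (lam : ℝ) (hlam : 0 < lam)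
    (S : Fin s → Ω → Fin m × Fin d)
    (hmeas : ∀ ℓ, Measurable (S ℓ))
    (hiid : iIndepFun S μ)
    (hdist : ∀ (ℓ : Fin s) (a : Fin m × Fin d),
      μ (S ℓ ⁻¹' {a}) = ENNReal.ofReal (|v a.1 a.2| / ∑ k, ∑ j, |v k j|))
    (Γ : ℝ) (hΓ : Γ = lam * ∑ k, ∑ j, |v k j|)
    (g : Fin m → Ω → Fin d → ℝ)
    (hg : ∀ i ω j, g i ω j =
      (((Finset.univ.filter fun ℓ => S ℓ ω = (i, j)).card : ℝ) / s)
        * Real.sign (v i j) * Γ) :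
    (∀ i, ∫ ω, ∑ j, (g i ω j) ^ 2 ∂μ =
      lam ^ 2 * ((1 - 1 / s) * ∑ j, (v i j) ^ 2
        + (1 / s) * (∑ j, |v i j|) * ∑ k, ∑ j, |v k j|))
    ∧ ∀ G₁ G₂ Ginf : ℝ,
        (∀ i, Real.sqrt (∑ j, (v i j) ^ 2) ≤ G₂) →
        (∀ i, ∑ j, |v i j| ≤ Ginf) →
        (∑ k, ∑ j, |v k j|) ≤ G₁ →
        G₂ ^ 2 ≤ G₁ * Ginf →
        ∀ i, ∫ ω, ∑ j, (g i ω j) ^ 2 ∂μ ≤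
          lam ^ 2 * (G₂ ^ 2 + (G₁ * Ginf - G₂ ^ 2) / s) := by
  set T : ℝ := ∑ k, ∑ j, |v k j| with hT
  have hTpos : 0 < T := by
    obtain ⟨i0, j0, h0⟩ := hv
    have h1 : 0 < ∑ j, |v i0 j| :=
      Finset.sum_pos' (fun j _ => abs_nonneg _) ⟨j0, Finset.mem_univ _, abs_pos.2 h0⟩
    exact Finset.sum_pos' (fun k _ => Finset.sum_nonneg fun j _ => abs_nonneg _)
      ⟨i0, Finset.mem_univ _, h1⟩
  have hspos : (0:ℝ) < (s:ℝ) := by exact_mod_cast hs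
  have hs' : (s:ℝ) ≠ 0 := ne_of_gt hspos
  have hT' : T ≠ 0 := ne_of_gt hTpos
  have hp : ∀ a : Fin m × Fin d, 0 ≤ |v a.1 a.2| / T :=
    fun a => div_nonneg (abs_nonneg _) hTpos.le
  have haux : ∀ a : Fin m × Fin d,
      Integrable (fun ω => (((Finset.univ.filter fun ℓ => S ℓ ω = a).card : ℝ)) ^ 2) μ ∧
      ∫ ω, (((Finset.univ.filter fun ℓ => S ℓ ω = a).card : ℝ)) ^ 2 ∂μ
        = s * (|v a.1 a.2| / T) + s * ((s : ℝ) - 1) * (|v a.1 a.2| / T) ^ 2 :=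
    fun a => aux_count μ S hmeas hiid a _ (hp a) (fun ℓ => hdist ℓ a)
  have hg2 : ∀ i j, (fun ω => (g i ω j) ^ 2)
      = fun ω => (Real.sign (v i j) * Γ / s) ^ 2
          * (((Finset.univ.filter fun ℓ => S ℓ ω = (i, j)).card : ℝ)) ^ 2 := by
    intro i j; funext ω; rw [hg]; ring
  have hint : ∀ i j, Integrable (fun ω => (g i ω j) ^ 2) μ := by
    intro i j; rw [hg2]; exact (haux (i, j)).1.const_mul _
  have hterm : ∀ i j, ∫ ω, (g i ω j) ^ 2 ∂μ
      = lam ^ 2 * (1 - 1 / (s:ℝ)) * (v i j) ^ 2 + (lam ^ 2 * (1 / (s:ℝ)) * T) * |v i j| := by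
    intro i j
    rw [hg2, MeasureTheory.integral_const_mul, (haux (i, j)).2]
    rcases eq_or_ne (v i j) 0 with h | h
    · simp [h]
    · have h1 : Real.sign (v i j) ^ 2 = 1 := by
        rcases h.lt_or_gt with hlt | hlt
        · rw [Real.sign_of_neg hlt]; norm_num
        · rw [Real.sign_of_pos hlt]; norm_num
      have h2 : (Real.sign (v i j) * Γ / s) ^ 2 = (Γ / s) ^ 2 := by
        rw [mul_div_assoc, mul_pow, h1, one_mul]
      rw [h2, hΓ, ← sq_abs (v i j)]
      field_simp
      ring
  have part1 : ∀ i, ∫ ω, ∑ j, (g i ω j) ^ 2 ∂μ =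
      lam ^ 2 * ((1 - 1 / s) * ∑ j, (v i j) ^ 2 + (1 / s) * (∑ j, |v i j|) * T) := by
    intro i
    calc ∫ ω, ∑ j, (g i ω j) ^ 2 ∂μ = ∑ j, ∫ ω, (g i ω j) ^ 2 ∂μ :=
          integral_finset_sum _ fun j _ => hint i j
      _ = ∑ j, (lam ^ 2 * (1 - 1 / (s:ℝ)) * (v i j) ^ 2
            + (lam ^ 2 * (1 / (s:ℝ)) * T) * |v i j|) :=
          Finset.sum_congr rfl fun j _ => hterm i j
      _ = lam ^ 2 * (1 - 1 / (s:ℝ)) * (∑ j, (v i j) ^ 2)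
            + (lam ^ 2 * (1 / (s:ℝ)) * T) * (∑ j, |v i j|) := by
          rw [Finset.sum_add_distrib, ← Finset.mul_sum, ← Finset.mul_sum]
      _ = lam ^ 2 * ((1 - 1 / s) * ∑ j, (v i j) ^ 2 + (1 / s) * (∑ j, |v i j|) * T) := by
          ring
  refine ⟨part1, ?_⟩
  intro G₁ G₂ Ginf hG2 hGinf hG1 hGG i
  rw [part1 i]
  have hA : (0:ℝ) ≤ ∑ j, (v i j) ^ 2 := Finset.sum_nonneg fun j _ => sq_nonneg _
  have hA2 : ∑ j, (v i j) ^ 2 ≤ G₂ ^ 2 := by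
    have := Real.sq_sqrt hA
    nlinarith [hG2 i, Real.sqrt_nonneg (∑ j, (v i j) ^ 2)]
  have hB : (0:ℝ) ≤ ∑ j, |v i j| := Finset.sum_nonneg fun j _ => abs_nonneg _
  have hGinf0 : 0 ≤ Ginf := hB.trans (hGinf i)
  have hBT : (∑ j, |v i j|) * T ≤ Ginf * G₁ :=
    mul_le_mul (hGinf i) hG1 hTpos.le hGinf0
  have h1s : (0:ℝ) ≤ 1 - 1 / (s:ℝ) := by
    rw [sub_nonneg, div_le_one hspos]
    exact_mod_cast hs
  have hrhs : lam ^ 2 * (G₂ ^ 2 + (G₁ * Ginf - G₂ ^ 2) / s)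
      = lam ^ 2 * ((1 - 1 / (s:ℝ)) * G₂ ^ 2 + (1 / (s:ℝ)) * (G₁ * Ginf)) := by
    field_simp
    ring
  rw [hrhs]
  have e1 : 0 ≤ lam ^ 2 * ((1 - 1 / (s:ℝ)) * (G₂ ^ 2 - ∑ j, (v i j) ^ 2)) :=
    mul_nonneg (sq_nonneg _) (mul_nonneg h1s (by linarith))
  have e2 : 0 ≤ lam ^ 2 * ((1 / (s:ℝ)) * (G₁ * Ginf - (∑ j, |v i j|) * T)) :=
    mul_nonneg (sq_nonneg _) (mul_nonneg (by positivity) (by linarith [hBT]))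
  nlinarith [e1, e2]
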